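/- Let S be a numerical semigroup. For every j ∈ {1, ..., m(S)−1}, one has η_j = ⌊w_j/m⌋ − ⌊w_{j−1}/m⌋, where m = m(S). -/

import Mathlib

/-- A numerical semigroup: an additive submonoid of `ℕ` (containing `0`, closed under
addition) whose complement in `ℕ` is finite. -/
structure NumericalSemigroup where
  carrier : Set ℕ
  zero_mem : 0 ∈ carrier
  add_mem : ∀ ⦃a b : ℕ⦄, a ∈ carrier → b ∈ carrier → a + b ∈ carrier
  cofinite : (carrierᶜ : Set ℕ).Finite

namespace NumericalSemigroup

/-- The multiplicity `m(S)`: the smallest positive element of `S`. -/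
noncomputable def mult (S : NumericalSemigroup) : ℕ :=
  sInf {s : ℕ | s ∈ S.carrier ∧ 0 < s}

/-- The embedding dimension `ν(S)`: the cardinality of the (unique) minimal system of
generators of `S`, i.e. the least cardinality of a generating set. -/
noncomputable def embdim (S : NumericalSemigroup) : ℕ :=
  sInf {n : ℕ | ∃ G : Finset ℕ,
    S.carrier = (AddSubmonoid.closure (G : Set ℕ) : Set ℕ) ∧ G.card = n}

/-- The Frobenius number `f(S)`: the largest integer not belonging to `S`. -/
noncomputable def frob (S : NumericalSemigroup) : ℤ :=
  sSup {x : ℤ | ∀ s ∈ S.carrier, (s : ℤ) ≠ x}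

/-- `n(S)`: the number of elements of `S` smaller than the Frobenius number. -/
noncomputable def small (S : NumericalSemigroup) : ℕ :=
  {s : ℕ | s ∈ S.carrier ∧ (s : ℤ) < S.frob}.ncard

/-- The type `t(S)`: the number of pseudo-Frobenius numbers of `S`, i.e. integers
`x ∉ S` such that `x + s ∈ S` for every nonzero `s ∈ S`. -/
noncomputable def typ (S : NumericalSemigroup) : ℕ :=
  {x : ℤ | (∀ s ∈ S.carrier, (s : ℤ) ≠ x) ∧
    ∀ s ∈ S.carrier, 0 < s → ∃ u ∈ S.carrier, (u : ℤ) = x + s}.ncard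

/-- The `k`-th interval `I_k = [k·m, (k+1)·m - 1]` (for a given `m`). -/
def interval (m k : ℕ) : Set ℕ := Set.Ico (k * m) ((k + 1) * m)

/-- `n_k`: the number of elements of `S ∩ I_k` smaller than the Frobenius number. -/
noncomputable def nk (S : NumericalSemigroup) (k : ℕ) : ℕ :=
  {s : ℕ | s ∈ S.carrier ∩ interval S.mult k ∧ (s : ℤ) < S.frob}.ncard

/-- `L = ⌊f(S)/m(S)⌋`. -/
noncomputable def Lindex (S : NumericalSemigroup) : ℤ := S.frob / (S.mult : ℤ)

/-- `ρ = f(S) + 1 - L·m(S)`. -/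
noncomputable def rho (S : NumericalSemigroup) : ℤ :=
  S.frob + 1 - S.Lindex * (S.mult : ℤ)

/-- The Apéry set `Ap(S) = {w ∈ S : w - m(S) ∉ S}`. -/
def apery (S : NumericalSemigroup) : Set ℕ :=
  {w : ℕ | w ∈ S.carrier ∧ ∀ u ∈ S.carrier, u + S.mult ≠ w}

theorem apery_finite (S : NumericalSemigroup) : S.apery.Finite := by
  apply Set.Finite.subset ((Set.finite_Iio S.mult).union (S.cofinite.image (· + S.mult)))
  intro x hx
  by_cases h : x < S.mult
  · exact Or.inl h
  · refine Or.inr ⟨x - S.mult, fun hmem => hx.2 _ hmem (by omega), ?_⟩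
    show x - S.mult + S.mult = x
    omega

/-- `w j`: the `(j+1)`-st smallest element of the Apéry set, so that
`Ap(S) = {w 0 < w 1 < ... < w (m-1)}` with `w 0 = 0`. -/
noncomputable def w (S : NumericalSemigroup) (j : ℕ) : ℕ :=
  (S.apery_finite.toFinset.sort (· ≤ ·)).getD j 0

/-- `ε_j`: the number of `k ∈ {0, ..., L-1}` such that `|I_k ∩ S| = j`. -/
noncomputable def eps (S : NumericalSemigroup) (j : ℕ) : ℕ :=
  {k : ℕ | (k : ℤ) < S.Lindex ∧ (S.carrier ∩ interval S.mult k).ncard = j}.ncard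

/-- `η_j`: the number of `k ∈ ℕ` such that `|I_k ∩ S| = j`. -/
noncomputable def eta (S : NumericalSemigroup) (j : ℕ) : ℕ :=
  {k : ℕ | (S.carrier ∩ interval S.mult k).ncard = j}.ncard


/-! ### Auxiliary lemmas -/

lemma exists_bound (S : NumericalSemigroup) : ∃ N, ∀ n, N ≤ n → n ∈ S.carrier := by
  obtain ⟨N, hN⟩ := S.cofinite.bddAbove
  refine ⟨N + 1, fun n hn => ?_⟩
  by_contra h
  have := hN h
  omega

lemma mult_spec (S : NumericalSemigroup) : S.mult ∈ S.carrier ∧ 0 < S.mult := by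
  have : S.mult ∈ {s : ℕ | s ∈ S.carrier ∧ 0 < s} := by
    apply Nat.sInf_mem
    obtain ⟨N, hN⟩ := S.exists_bound
    exact ⟨N + 1, hN _ (by omega), by omega⟩
  exact this

/-- The least element of `S` in the residue class of `r` mod `m`. -/
noncomputable def aS (S : NumericalSemigroup) (r : ℕ) : ℕ :=
  sInf {s | s ∈ S.carrier ∧ s % S.mult = r}

lemma aS_spec (S : NumericalSemigroup) {r : ℕ} (hr : r < S.mult) :
    S.aS r ∈ S.carrier ∧ S.aS r % S.mult = r := by
  have : S.aS r ∈ {s | s ∈ S.carrier ∧ s % S.mult = r} := by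
    apply Nat.sInf_mem
    obtain ⟨N, hN⟩ := S.exists_bound
    refine ⟨N * S.mult + r, hN _ ?_, ?_⟩
    · have h1 : N ≤ N * S.mult := Nat.le_mul_of_pos_right N S.mult_spec.2
      omega
    · rw [Nat.mul_comm, Nat.mul_add_mod, Nat.mod_eq_of_lt hr]
  exact this

lemma aS_le (S : NumericalSemigroup) {s : ℕ} (hs : s ∈ S.carrier) :
    S.aS (s % S.mult) ≤ s := Nat.sInf_le ⟨hs, rfl⟩

lemma mul_mult_mem (S : NumericalSemigroup) (t : ℕ) : t * S.mult ∈ S.carrier := by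
  induction t with
  | zero => simpa using S.zero_mem
  | succ n ih => rw [Nat.succ_mul]; exact S.add_mem ih S.mult_spec.1

lemma mem_iff_aS_le (S : NumericalSemigroup) (n : ℕ) :
    n ∈ S.carrier ↔ S.aS (n % S.mult) ≤ n := by
  constructor
  · exact S.aS_le
  · intro h
    have hm := S.mult_spec.2
    have hr : n % S.mult < S.mult := Nat.mod_lt _ hm
    obtain ⟨ha, hmod⟩ := S.aS_spec hr
    have hdvd : S.mult ∣ n - S.aS (n % S.mult) := by
      apply Nat.dvd_of_mod_eq_zero
      exact Nat.sub_mod_eq_zero_of_mod_eq hmod.symm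
    obtain ⟨t, ht⟩ := hdvd
    have hn : n = S.aS (n % S.mult) + t * S.mult := by
      rw [Nat.mul_comm] at ht
      omega
    rw [hn]
    exact S.add_mem ha (S.mul_mult_mem t)

lemma mem_apery_iff (S : NumericalSemigroup) (n : ℕ) :
    n ∈ S.apery ↔ n = S.aS (n % S.mult) := by
  have hm := S.mult_spec.2
  have hr : n % S.mult < S.mult := Nat.mod_lt _ hm
  constructor
  · rintro ⟨hnS, hno⟩
    have hle : S.aS (n % S.mult) ≤ n := S.aS_le hnS
    by_contra hne
    have hlt : S.aS (n % S.mult) < n := lt_of_le_of_ne hle (Ne.symm hne)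
    have hdvd : S.mult ∣ n - S.aS (n % S.mult) := by
      apply Nat.dvd_of_mod_eq_zero
      exact Nat.sub_mod_eq_zero_of_mod_eq ((S.aS_spec hr).2).symm
    have hge : S.mult ≤ n - S.aS (n % S.mult) := Nat.le_of_dvd (by omega) hdvd
    have hmem : n - S.mult ∈ S.carrier := by
      rw [S.mem_iff_aS_le]
      have hmodeq : (n - S.mult) % S.mult = n % S.mult := by
        have h1 : n = (n - S.mult) + S.mult := by omega
        conv_rhs => rw [h1]
        rw [Nat.add_mod_right]
      rw [hmodeq]
      omega
    exact hno _ hmem (by omega)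
  · intro heq
    obtain ⟨haS, hamod⟩ := S.aS_spec hr
    refine ⟨heq ▸ haS, fun u hu hun => ?_⟩
    have humod : u % S.mult = n % S.mult := by
      rw [← hun, Nat.add_mod_right]
    have := S.aS_le hu
    rw [humod, ← heq] at this
    omega

lemma apery_eq_image (S : NumericalSemigroup) :
    S.apery_finite.toFinset = (Finset.range S.mult).image S.aS := by
  ext x
  simp only [Set.Finite.mem_toFinset, Finset.mem_image, Finset.mem_range]
  constructor
  · intro hx
    exact ⟨x % S.mult, Nat.mod_lt _ S.mult_spec.2, ((S.mem_apery_iff x).1 hx).symm⟩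
  · rintro ⟨r, hr, rfl⟩
    rw [S.mem_apery_iff, (S.aS_spec hr).2]

lemma aS_injOn (S : NumericalSemigroup) :
    Set.InjOn S.aS (Finset.range S.mult) := by
  intro r hr r' hr' h
  simp only [Finset.coe_range, Set.mem_Iio] at hr hr'
  have h1 := (S.aS_spec hr).2
  have h2 := (S.aS_spec hr').2
  rw [← h1, ← h2, h]

lemma card_apery (S : NumericalSemigroup) :
    S.apery_finite.toFinset.card = S.mult := by
  rw [S.apery_eq_image, Finset.card_image_of_injOn S.aS_injOn, Finset.card_range]

lemma length_sort_apery (S : NumericalSemigroup) :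
    (S.apery_finite.toFinset.sort (· ≤ ·)).length = S.mult := by
  rw [Finset.length_sort, S.card_apery]

lemma w_lt_w (S : NumericalSemigroup) {i i' : ℕ} (h : i < i') (h' : i' < S.mult) :
    S.w i < S.w i' := by
  have hlen := S.length_sort_apery
  have hs := S.apery_finite.toFinset.sortedLT_sort.pairwise
  unfold w
  rw [List.getD_eq_getElem _ _ (by omega), List.getD_eq_getElem _ _ (by omega)]
  exact List.pairwise_iff_getElem.1 hs _ _ (by omega) (by omega) h

lemma w_le_w (S : NumericalSemigroup) {i i' : ℕ} (h : i ≤ i') (h' : i' < S.mult) :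
    S.w i ≤ S.w i' := by
  rcases Nat.lt_or_ge i i' with hlt | hge
  · exact le_of_lt (S.w_lt_w hlt h')
  · have : i = i' := by omega
    rw [this]

lemma w_injOn (S : NumericalSemigroup) :
    Set.InjOn S.w (Finset.range S.mult) := by
  intro i hi i' hi' h
  simp only [Finset.coe_range, Set.mem_Iio] at hi hi'
  by_contra hne
  rcases Nat.lt_or_ge i i' with hlt | hge
  · have := S.w_lt_w hlt hi'
    omega
  · have hlt : i' < i := by omega
    have := S.w_lt_w hlt hi
    omega

lemma image_w (S : NumericalSemigroup) :
    (Finset.range S.mult).image S.w = S.apery_finite.toFinset := by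
  have hlen := S.length_sort_apery
  ext x
  simp only [Finset.mem_image, Finset.mem_range]
  rw [← Finset.mem_sort (α := ℕ) (· ≤ ·), List.mem_iff_getElem]
  constructor
  · rintro ⟨i, hi, rfl⟩
    exact ⟨i, by omega, (List.getD_eq_getElem _ _ (by omega)).symm⟩
  · rintro ⟨i, hi, hx⟩
    refine ⟨i, by omega, ?_⟩
    unfold w
    rw [List.getD_eq_getElem _ _ hi]
    exact hx

lemma aS_div_le (S : NumericalSemigroup) {r : ℕ} (hr : r < S.mult) (k : ℕ) :
    S.aS r / S.mult ≤ k ↔ S.aS r ≤ k * S.mult + r := by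
  have hm := S.mult_spec.2
  have h1 := (S.aS_spec hr).2
  have h2 := Nat.div_add_mod (S.aS r) S.mult
  constructor
  · intro h
    have h3 : S.mult * (S.aS r / S.mult) ≤ S.mult * k := Nat.mul_le_mul_left _ h
    calc S.aS r = S.mult * (S.aS r / S.mult) + r := by omega
      _ ≤ S.mult * k + r := by omega
      _ = k * S.mult + r := by rw [Nat.mul_comm]
  · intro h
    have h4 : S.mult * (S.aS r / S.mult) ≤ S.mult * k := by
      have : k * S.mult = S.mult * k := Nat.mul_comm _ _
      omega
    exact Nat.le_of_mul_le_mul_left h4 hm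

lemma card_filter_aux {m : ℕ} {f : ℕ → ℕ} (hinj : Set.InjOn f (Finset.range m))
    (p : ℕ → Prop) [DecidablePred p] :
    ((Finset.range m).filter (fun i => p (f i))).card
      = (((Finset.range m).image f).filter p).card := by
  rw [Finset.filter_image,
    Finset.card_image_of_injOn (hinj.mono (Finset.coe_subset.2 (Finset.filter_subset _ _)))]

lemma count_eq (S : NumericalSemigroup) (k : ℕ) :
    (S.carrier ∩ interval S.mult k).ncard
      = ((Finset.range S.mult).filter (fun i => S.w i / S.mult ≤ k)).card := by
  have hm := S.mult_spec.2
  have hmul : (k + 1) * S.mult = k * S.mult + S.mult := by ring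
  have hset : S.carrier ∩ interval S.mult k
      = ↑(((Finset.range S.mult).filter (fun r => S.aS r / S.mult ≤ k)).image
          (fun r => k * S.mult + r)) := by
    ext x
    simp only [Set.mem_inter_iff, Finset.coe_image, Set.mem_image, Finset.mem_coe,
      Finset.mem_filter, Finset.mem_range, interval, Set.mem_Ico]
    constructor
    · rintro ⟨hxS, hx1, hx2⟩
      have hrlt : x - k * S.mult < S.mult := by omega
      have hxeq : x = k * S.mult + (x - k * S.mult) := by omega
      have hmod : x % S.mult = x - k * S.mult := by
        have h5 := Nat.mul_add_mod S.mult k (x - k * S.mult)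
        rw [Nat.mod_eq_of_lt hrlt] at h5
        rw [← h5]
        congr 1
        rw [Nat.mul_comm]
        omega
      refine ⟨x - k * S.mult, ⟨hrlt, ?_⟩, by omega⟩
      rw [S.aS_div_le hrlt]
      have := (S.mem_iff_aS_le x).1 hxS
      rw [hmod] at this
      omega
    · rintro ⟨r, ⟨hr, hdiv⟩, rfl⟩
      have hmod : (k * S.mult + r) % S.mult = r := by
        conv_lhs => rw [Nat.mul_comm]
        rw [Nat.mul_add_mod, Nat.mod_eq_of_lt hr]
      refine ⟨?_, by omega, by omega⟩
      rw [S.mem_iff_aS_le, hmod]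
      exact (S.aS_div_le hr k).1 hdiv
  rw [hset, Set.ncard_coe_finset,
    Finset.card_image_of_injective _ (add_right_injective _)]
  calc ((Finset.range S.mult).filter (fun r => S.aS r / S.mult ≤ k)).card
      = (((Finset.range S.mult).image S.aS).filter (fun x => x / S.mult ≤ k)).card :=
        card_filter_aux S.aS_injOn (fun x => x / S.mult ≤ k)
    _ = (((Finset.range S.mult).image S.w).filter (fun x => x / S.mult ≤ k)).card := by
        rw [← S.apery_eq_image, ← S.image_w]
    _ = _ := (card_filter_aux S.w_injOn (fun x => x / S.mult ≤ k)).symm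

lemma downclosed_eq_range (F : Finset ℕ) (h : ∀ i ∈ F, ∀ i', i' ≤ i → i' ∈ F) :
    F = Finset.range F.card := by
  rcases F.eq_empty_or_nonempty with rfl | hne
  · simp
  · have hM := F.max'_mem hne
    have hFr : F = Finset.range (F.max' hne + 1) := by
      ext x
      simp only [Finset.mem_range]
      constructor
      · intro hx; exact Nat.lt_succ_of_le (F.le_max' x hx)
      · intro hx; exact h _ hM x (by omega)
    have hcard : F.card = F.max' hne + 1 := by
      conv_lhs => rw [hFr]
      exact Finset.card_range _
    rw [hcard]
    exact hFr

/-- For every `j ∈ {1, ..., m-1}`, `η_j = ⌊w_j/m⌋ - ⌊w_{j-1}/m⌋`. -/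
theorem eta_eq_floor_sub_floor (S : NumericalSemigroup)
    (j : ℕ) (hj1 : 1 ≤ j) (hj2 : j ≤ S.mult - 1) :
    (S.eta j : ℤ) = ((S.w j / S.mult : ℕ) : ℤ) - ((S.w (j - 1) / S.mult : ℕ) : ℤ) := by
  have hm := S.mult_spec.2
  have hjm : j < S.mult := by omega
  have hj1m : j - 1 < S.mult := by omega
  have hw_le : S.w (j - 1) / S.mult ≤ S.w j / S.mult :=
    Nat.div_le_div_right (le_of_lt (S.w_lt_w (by omega) hjm))
  have hset : {k : ℕ | (S.carrier ∩ interval S.mult k).ncard = j}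
      = Set.Ico (S.w (j - 1) / S.mult) (S.w j / S.mult) := by
    ext k
    simp only [Set.mem_setOf_eq, Set.mem_Ico]
    rw [S.count_eq k]
    set F := (Finset.range S.mult).filter (fun i => S.w i / S.mult ≤ k) with hF
    have hdc : ∀ i ∈ F, ∀ i', i' ≤ i → i' ∈ F := by
      intro i hi i' hle
      rw [hF, Finset.mem_filter, Finset.mem_range] at hi ⊢
      refine ⟨by omega, ?_⟩
      calc S.w i' / S.mult ≤ S.w i / S.mult :=
            Nat.div_le_div_right (S.w_le_w hle hi.1)
        _ ≤ k := hi.2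
    have hFr := downclosed_eq_range F hdc
    constructor
    · intro hcard
      have h1 : j - 1 ∈ F := by rw [hFr, hcard, Finset.mem_range]; omega
      have h2 : j ∉ F := by rw [hFr, hcard, Finset.mem_range]; omega
      rw [hF, Finset.mem_filter, Finset.mem_range] at h1 h2
      refine ⟨h1.2, ?_⟩
      by_contra hc
      exact h2 ⟨hjm, by omega⟩
    · rintro ⟨h1, h2⟩
      have hj1F : j - 1 ∈ F := by
        rw [hF, Finset.mem_filter, Finset.mem_range]; exact ⟨hj1m, h1⟩
      have hjF : j ∉ F := by
        rw [hF, Finset.mem_filter, Finset.mem_range]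
        rintro ⟨-, hle⟩; omega
      rw [hFr, Finset.mem_range] at hj1F hjF
      omega
  unfold eta
  rw [hset, ← Finset.coe_Ico, Set.ncard_coe_finset, Nat.card_Ico]
  omega

end NumericalSemigroup
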